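/- Let G be a graph, M a feedback vertex set, X ⊆ M with |X \ S| ≥ 2 for some feedback vertex set S of G, and let 𝒯 be a family of pairwise disjoint, pairwise non-adjacent connected vertex subsets of G − M each with X ⊆ N(T). Then S intersects all members of 𝒯 except at most one. -/

import Mathlib

open SimpleGraph Finset

lemma aux_path {V : Type*} (G : SimpleGraph V) (s T : Set V) (hTs : T ⊆ s)
    (hconn : (G.induce T).Connected) (u v : V) (hu : u ∈ T) (hv : v ∈ T) :
    ∃ w : (G.induce s).Walk ⟨u, hTs hu⟩ ⟨v, hTs hv⟩, w.IsPath ∧ ∀ z ∈ w.support, (z : V) ∈ T := by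
  classical
  obtain ⟨w0⟩ := hconn ⟨u, hu⟩ ⟨v, hv⟩
  set p := w0.toPath with hp
  refine ⟨((p : (G.induce T).Walk ⟨u, hu⟩ ⟨v, hv⟩).map (G.induceHomOfLE hTs).toHom).copy rfl rfl, ?_, ?_⟩
  · change ((p : (G.induce T).Walk ⟨u, hu⟩ ⟨v, hv⟩).map (G.induceHomOfLE hTs).toHom).IsPath
    exact SimpleGraph.Walk.map_isPath_of_injective
      (by intro a b hab; exact (Set.inclusion_injective hTs) hab) p.2
  · intro z hz
    change z ∈ ((p : (G.induce T).Walk ⟨u, hu⟩ ⟨v, hv⟩).map (G.induceHomOfLE hTs).toHom).support at hz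
    rw [SimpleGraph.Walk.support_map] at hz
    obtain ⟨y, _, rfl⟩ := List.mem_map.mp hz
    exact y.2


/-- `S` is a feedback vertex set of `G`: removing `S` leaves an acyclic graph. -/
def IsFVS {V : Type*} (G : SimpleGraph V) (S : Set V) : Prop :=
  (G.induce Sᶜ).IsAcyclic

/-- Let `M` be a feedback vertex set of `G`, `S` a feedback vertex set with `|X \ S| ≥ 2` for
some `X ⊆ M`, and `𝒯` a family of pairwise disjoint, pairwise non-adjacent connected vertex
subsets of `G - M` each with `X ⊆ N(T)`. Then `S` intersects all members of `𝒯` except at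
most one (i.e. at most one member of `𝒯` is disjoint from `S`). -/
theorem stmt18 {V : Type*} [DecidableEq V] (G : SimpleGraph V)
    (M : Finset V) (hM : IsFVS G ↑M)
    (X : Finset V) (hX : X ⊆ M)
    (S : Finset V) (hS : IsFVS G ↑S) (hXS : 2 ≤ (X \ S).card)
    (𝒯 : Finset (Finset V))
    (hTM : ∀ T ∈ 𝒯, Disjoint T M)
    (hconn : ∀ T ∈ 𝒯, (G.induce (T : Set V)).Connected)
    (hdisj : ∀ T ∈ 𝒯, ∀ T' ∈ 𝒯, T ≠ T' → Disjoint T T')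
    (hnonadj : ∀ T ∈ 𝒯, ∀ T' ∈ 𝒯, T ≠ T' → ∀ u ∈ T, ∀ v ∈ T', ¬ G.Adj u v)
    (hnb : ∀ T ∈ 𝒯, ∀ x ∈ X, ∃ v ∈ T, G.Adj x v) :
    ∀ T₁ ∈ 𝒯, ∀ T₂ ∈ 𝒯, T₁ ∩ S = ∅ → T₂ ∩ S = ∅ → T₁ = T₂ := by
  intro T₁ hT₁ T₂ hT₂ hS₁ hS₂
  by_contra hne
  -- two vertices of X \ S
  obtain ⟨x₁, hx₁, x₂, hx₂, hx12⟩ := Finset.one_lt_card.mp (by omega : 1 < (X \ S).card)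
  obtain ⟨hx₁X, hx₁S⟩ := Finset.mem_sdiff.mp hx₁
  obtain ⟨hx₂X, hx₂S⟩ := Finset.mem_sdiff.mp hx₂
  set s : Set V := (↑S : Set V)ᶜ with hs
  have hT₁s : (↑T₁ : Set V) ⊆ s := by
    intro t ht
    simp only [hs, Set.mem_compl_iff, Finset.mem_coe] at *
    intro htS
    exact Finset.eq_empty_iff_forall_notMem.mp hS₁ t (Finset.mem_inter.mpr ⟨ht, htS⟩)
  have hT₂s : (↑T₂ : Set V) ⊆ s := by
    intro t ht
    simp only [hs, Set.mem_compl_iff, Finset.mem_coe] at *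
    intro htS
    exact Finset.eq_empty_iff_forall_notMem.mp hS₂ t (Finset.mem_inter.mpr ⟨ht, htS⟩)
  have hx₁s : x₁ ∈ s := by simpa [hs] using hx₁S
  have hx₂s : x₂ ∈ s := by simpa [hs] using hx₂S
  -- neighbors
  obtain ⟨u₁, hu₁, hau₁⟩ := hnb T₁ hT₁ x₁ hx₁X
  obtain ⟨v₁, hv₁, hav₁⟩ := hnb T₁ hT₁ x₂ hx₂X
  obtain ⟨u₂, hu₂, hau₂⟩ := hnb T₂ hT₂ x₁ hx₁X
  obtain ⟨v₂, hv₂, hav₂⟩ := hnb T₂ hT₂ x₂ hx₂X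
  -- non-memberships
  have hx₁T₁ : x₁ ∉ T₁ := fun h => Finset.disjoint_left.mp (hTM T₁ hT₁) h (hX hx₁X)
  have hx₂T₁ : x₂ ∉ T₁ := fun h => Finset.disjoint_left.mp (hTM T₁ hT₁) h (hX hx₂X)
  have hx₁T₂ : x₁ ∉ T₂ := fun h => Finset.disjoint_left.mp (hTM T₂ hT₂) h (hX hx₁X)
  have hx₂T₂ : x₂ ∉ T₂ := fun h => Finset.disjoint_left.mp (hTM T₂ hT₂) h (hX hx₂X)
  have hu₁T₂ : u₁ ∉ T₂ := fun h => Finset.disjoint_left.mp (hdisj T₁ hT₁ T₂ hT₂ hne) hu₁ h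
  -- paths inside T₁, T₂
  obtain ⟨w₁, hw₁p, hw₁s⟩ := aux_path G s ↑T₁ hT₁s (hconn T₁ hT₁) u₁ v₁
    (Finset.mem_coe.mpr hu₁) (Finset.mem_coe.mpr hv₁)
  obtain ⟨w₂, hw₂p, hw₂s⟩ := aux_path G s ↑T₂ hT₂s (hconn T₂ hT₂) u₂ v₂
    (Finset.mem_coe.mpr hu₂) (Finset.mem_coe.mpr hv₂)
  -- adjacencies in the induced graph
  have ha₁ : (G.induce s).Adj ⟨x₁, hx₁s⟩ ⟨u₁, hT₁s hu₁⟩ := hau₁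
  have ha₂ : (G.induce s).Adj ⟨v₁, hT₁s hv₁⟩ ⟨x₂, hx₂s⟩ := hav₁.symm
  have hb₁ : (G.induce s).Adj ⟨x₁, hx₁s⟩ ⟨u₂, hT₂s hu₂⟩ := hau₂
  have hb₂ : (G.induce s).Adj ⟨v₂, hT₂s hv₂⟩ ⟨x₂, hx₂s⟩ := hav₂.symm
  set q₁ : (G.induce s).Walk ⟨x₁, hx₁s⟩ ⟨x₂, hx₂s⟩ := Walk.cons ha₁ (w₁.concat ha₂) with hq₁
  set q₂ : (G.induce s).Walk ⟨x₁, hx₁s⟩ ⟨x₂, hx₂s⟩ := Walk.cons hb₁ (w₂.concat hb₂) with hq₂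
  have hx12' : (⟨x₁, hx₁s⟩ : s) ≠ ⟨x₂, hx₂s⟩ := fun h => hx12 (congrArg Subtype.val h)
  have hq₁p : q₁.IsPath := by
    rw [hq₁, Walk.isPath_def, Walk.support_cons, Walk.support_concat]
    refine List.nodup_cons.mpr ⟨?_, ?_⟩
    · intro h
      rcases List.mem_append.mp h with h | h
      · exact hx₁T₁ (hw₁s _ h)
      · exact hx12' (List.mem_singleton.mp h)
    · refine List.Nodup.append hw₁p.support_nodup (List.nodup_singleton _) ?_
      intro a ha hb
      have hax : a = ⟨x₂, hx₂s⟩ := List.mem_singleton.mp hb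
      rw [hax] at ha
      exact hx₂T₁ (Finset.mem_coe.mp (hw₁s _ ha))
  have hq₂p : q₂.IsPath := by
    rw [hq₂, Walk.isPath_def, Walk.support_cons, Walk.support_concat]
    refine List.nodup_cons.mpr ⟨?_, ?_⟩
    · intro h
      rcases List.mem_append.mp h with h | h
      · exact hx₁T₂ (hw₂s _ h)
      · exact hx12' (List.mem_singleton.mp h)
    · refine List.Nodup.append hw₂p.support_nodup (List.nodup_singleton _) ?_
      intro a ha hb
      have hax : a = ⟨x₂, hx₂s⟩ := List.mem_singleton.mp hb
      rw [hax] at ha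
      exact hx₂T₂ (Finset.mem_coe.mp (hw₂s _ ha))
  have hpq : (⟨q₁, hq₁p⟩ : (G.induce s).Path _ _) = ⟨q₂, hq₂p⟩ :=
    isAcyclic_iff_path_unique.mp hS _ _
  have hqq : q₁ = q₂ := congrArg Subtype.val hpq
  -- u₁ is on q₁ but not on q₂
  have hmem : (⟨u₁, hT₁s hu₁⟩ : s) ∈ q₁.support := by
    rw [hq₁, Walk.support_cons, Walk.support_concat]
    exact List.mem_cons_of_mem _ (List.mem_append_left _ w₁.start_mem_support)
  rw [hqq, hq₂, Walk.support_cons, Walk.support_concat] at hmem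
  rcases List.mem_cons.mp hmem with h | h
  · exact hx₁T₁ (by rw [Subtype.ext_iff] at h; simp only at h; rw [h] at hu₁; exact hu₁)
  · rcases List.mem_append.mp h with h | h
    · exact hu₁T₂ (hw₂s _ h)
    · have := List.mem_singleton.mp h
      rw [Subtype.ext_iff] at this
      simp only at this
      rw [this] at hu₁
      exact hx₂T₁ hu₁
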